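/- Let n be a positive integer, let p : {1,…,n} → ℝ be nonnegative, let φ_1,…,φ_n ∈ ℂ^n and ψ_1,…,ψ_n ∈ ℂ^n be orthonormal families, and let U_ρ be an n²×n² complex matrix (on ℂ^n ⊗ ℂ^n) with U_ρ(e_0 ⊗ e_0) = Σ_{i=1}^n √(p_i) · φ_i ⊗ ψ_i, and V an n²×n² matrix (on ℂ^n ⊗ ℂ^n) with V(e_0 ⊗ e_0) = Σ_{j=1}^n (1/√n) · e_j ⊗ e_j. On ℂ^n ⊗ ℂ^n ⊗ ℂ^n define U' := (I_n ⊗ U_ρᴴ)(V ⊗ I_n), Π' := I_n ⊗ E_{00} ⊗ E_{00}, and Π̃ := E_{00} ⊗ E_{00} ⊗ I_n, where U_ρᴴ acts on the last two tensor factors and V on the first two. Then Π' · U' · Π̃ = Σ_{i=1}^n √(p_i/n) · (φ'_i e_0*) ⊗ E_{00} ⊗ (e_0 ψ_i*), where φ'_i ∈ ℂ^n is the entrywise complex conjugate of φ_i, φ'_i e_0* is the n×n matrix whose (a,b) entry is φ'_i(a) if b = 0 and 0 otherwise, and e_0 ψ_i* is the n×n matrix whose (a,b) entry is conj(ψ_i(b))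 if a = 0 and 0 otherwise. -/

import Mathlib

open Kronecker Matrix

/-- The `j`-th standard basis vector of `ℂ^k`. -/
noncomputable def stdKet (k : ℕ) [NeZero k] (j : Fin k) : Fin k → ℂ :=
  fun a => if a = j then 1 else 0

/-- The `n × n` rank-one matrix `v e₀*`, whose `(a,b)` entry is `v a` if `b = 0` and `0` otherwise. -/
noncomputable def vecKetBraZero (n : ℕ) [NeZero n] (v : Fin n → ℂ) :
    Matrix (Fin n) (Fin n) ℂ :=
  Matrix.of fun a b => if b = 0 then v a else 0

/-- The `n × n` rank-one matrix `e₀ w*`, whose `(a,b)` entry is `conj (w b)` if `a = 0`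
and `0` otherwise. -/
noncomputable def ketZeroVecBra (n : ℕ) [NeZero n] (w : Fin n → ℂ) :
    Matrix (Fin n) (Fin n) ℂ :=
  Matrix.of fun a b => if a = 0 then star (w b) else 0

/-- The `n × n` matrix `E₀₀` with a single one in the top-left entry. -/
noncomputable def E₀₀ (n : ℕ) [NeZero n] : Matrix (Fin n) (Fin n) ℂ :=
  Matrix.single 0 0 1

/-- Projected unitary encoding built from a purified quantum query oracle for a density
operator `ρ = Σᵢ pᵢ |ψᵢ⟩⟨ψᵢ|`: with `U' = (I ⊗ U_ρᴴ)(V ⊗ I)` one has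
`Π' U' Π̃ = Σᵢ √(pᵢ/n) (φ'ᵢ e₀*) ⊗ E₀₀ ⊗ (e₀ ψᵢ*)`. -/
theorem stmt_15 (n : ℕ) [NeZero n] (p : Fin n → ℝ) (hp : ∀ i, 0 ≤ p i)
    (φ ψ : Fin n → Fin n → ℂ)
    (hφ : ∀ i j, (∑ a, star (φ i a) * φ j a) = if i = j then (1 : ℂ) else 0)
    (hψ : ∀ i j, (∑ a, star (ψ i a) * ψ j a) = if i = j then (1 : ℂ) else 0)
    (Uρ V : Matrix (Fin n × Fin n) (Fin n × Fin n) ℂ)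
    (hU : Uρ *ᵥ (fun q : Fin n × Fin n => stdKet n 0 q.1 * stdKet n 0 q.2) =
      ∑ i : Fin n, (Real.sqrt (p i) : ℂ) •
        (fun q : Fin n × Fin n => φ i q.1 * ψ i q.2))
    (hV : V *ᵥ (fun q : Fin n × Fin n => stdKet n 0 q.1 * stdKet n 0 q.2) =
      ∑ j : Fin n, ((1 / Real.sqrt n : ℝ) : ℂ) •
        (fun q : Fin n × Fin n => stdKet n j q.1 * stdKet n j q.2)) :
    ((1 : Matrix (Fin n) (Fin n) ℂ) ⊗ₖ (E₀₀ n ⊗ₖ E₀₀ n)) *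
      (((1 : Matrix (Fin n) (Fin n) ℂ) ⊗ₖ Uρᴴ) *
        (Matrix.reindex (Equiv.prodAssoc (Fin n) (Fin n) (Fin n))
          (Equiv.prodAssoc (Fin n) (Fin n) (Fin n))
          (V ⊗ₖ (1 : Matrix (Fin n) (Fin n) ℂ)))) *
      (E₀₀ n ⊗ₖ (E₀₀ n ⊗ₖ (1 : Matrix (Fin n) (Fin n) ℂ))) =
    ∑ i : Fin n, (Real.sqrt (p i / n) : ℂ) •
      (vecKetBraZero n (fun a => star (φ i a)) ⊗ₖ (E₀₀ n ⊗ₖ ketZeroVecBra n (ψ i))) := by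

  have hUe : ∀ y z : Fin n, Uρ (y,z) ((0:Fin n),(0:Fin n)) =
      ∑ i, (Real.sqrt (p i) : ℂ) * (φ i y * ψ i z) := by
    intro y z
    have h := congrFun hU (y,z)
    simpa [Matrix.mulVec, dotProduct, stdKet, Fintype.sum_prod_type, mul_ite, ite_mul,
      Finset.sum_ite_eq', Finset.sum_apply] using h
  have hVe : ∀ x y : Fin n, V (x,y) ((0:Fin n),(0:Fin n)) =
      if x = y then ((1 / Real.sqrt n : ℝ) : ℂ) else 0 := by
    intro x y
    have h := congrFun hV (x,y)
    simpa [Matrix.mulVec, dotProduct, stdKet, Fintype.sum_prod_type, mul_ite, ite_mul,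
      Finset.sum_ite_eq', Finset.sum_ite_eq, Finset.sum_apply, eq_comm] using h
  ext ⟨a, b, c⟩ ⟨a', b', c'⟩
  simp only [Matrix.mul_apply, Matrix.kroneckerMap_apply, Matrix.reindex_apply,
    Matrix.submatrix_apply, Equiv.prodAssoc_symm_apply, Matrix.conjTranspose_apply,
    E₀₀, Matrix.single, Matrix.of_apply, Matrix.one_apply,
    Fintype.sum_prod_type, mul_ite, ite_mul, mul_one, mul_zero, one_mul, zero_mul,
    ite_and, Finset.sum_ite_irrel, Finset.sum_ite_eq, Finset.sum_ite_eq', Finset.mem_univ, if_true,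
    Finset.sum_apply, Pi.smul_apply, smul_eq_mul, Finset.sum_const_zero,
    vecKetBraZero, ketZeroVecBra, Matrix.sum_apply]
  simp only [hVe, mul_ite, mul_zero, Finset.sum_ite_eq, Finset.mem_univ, if_true, hUe]
  by_cases hb' : b' = 0 <;> by_cases ha' : a' = 0 <;> by_cases hc : c = 0 <;>
    by_cases hb : b = 0 <;>
    simp [hb', ha', hc, hb, Matrix.smul_apply,
      Matrix.kroneckerMap_apply, Matrix.of_apply, smul_eq_mul, eq_comm]
  · rw [Finset.sum_mul]
    refine Finset.sum_congr rfl fun i _ => ?_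
    ring
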